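/- Let m ≥ 1 and consider 2m modes indexed by pairs (a,j) with a ∈ {0,1} and j ∈ ℤ/mℤ, and the 2m-photon space ℂ^{T(2m,2m)} with tuples ν : {0,1}×(ℤ/mℤ) → ℕ. For x ∈ {0,1}^{ℤ/mℤ} let ν_x be the tuple with ν_x(a,j) = 2 if a = x_j and ν_x(a,j) = 0 otherwise, and set v = 2^{−m/2} ∑_{x∈{0,1}^{ℤ/mℤ}} (∏_{j≠0} (−1)^{x_j}) e_{ν_x}. Let g₁ be the 2m×2m diagonal unitary with g₁ e_{(a,j)} = (−1)^a e_{(a,j)}, let g₂ be the permutation matrix with g₂ e_{(a,j)} = e_{(a,j+1)}, let G be the (abelian, order 2m) group generated by g₁ and g₂, and let P be the orthogonal projection onto {w : B_{2m}(g) w = w for all g ∈ G}. Then ‖P v‖² = 1/m. -/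

import Mathlib

namespace BSF

variable {α : Type*} [Fintype α] [DecidableEq α]

/-- The canonical list in which each index `i` is repeated `ν i` times. -/
noncomputable def repList (ν : α → ℕ) : List α :=
  Finset.univ.toList.flatMap fun i => List.replicate (ν i) i

set_option linter.unusedSectionVars false in
lemma repList_length (ν : α → ℕ) : (repList ν).length = ∑ i, ν i := by
  simp [repList, List.length_flatMap]

/-- The index set `T(m,n)`: occupation-number tuples with total `n`. -/
def BosonIdx (α : Type*) [Fintype α] (n : ℕ) := {ν : α → ℕ // ∑ i, ν i = n}

instance {n : ℕ} : DecidableEq (BosonIdx α n) :=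
  inferInstanceAs (DecidableEq {ν : α → ℕ // ∑ i, ν i = n})

noncomputable instance {n : ℕ} : Fintype (BosonIdx α n) :=
  Fintype.ofInjective
    (fun ν : BosonIdx α n => fun i : α =>
      (⟨ν.1 i, by
        have h := Finset.single_le_sum (f := ν.1) (fun j _ => Nat.zero_le _) (Finset.mem_univ i)
        rw [ν.2] at h
        omega⟩ : Fin (n + 1)))
    (fun a b hab => Subtype.ext (funext fun i => congrArg Fin.val (congrFun hab i)))

/-- The permanent of a square complex matrix. -/
noncomputable def permanent {n : ℕ} (M : Matrix (Fin n) (Fin n) ℂ) : ℂ :=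
  ∑ σ : Equiv.Perm (Fin n), ∏ i, M (σ i) i

/-- The canonical repetition function associated with an occupation tuple. -/
noncomputable def repFun {n : ℕ} (ν : BosonIdx α n) : Fin n → α :=
  fun k => (repList ν.1).get (Fin.cast ((repList_length ν.1).trans ν.2).symm k)

/-- The `n`-boson representation of a matrix `S`. -/
noncomputable def bosonRep (n : ℕ) (S : Matrix α α ℂ) :
    Matrix (BosonIdx α n) (BosonIdx α n) ℂ :=
  Matrix.of fun ν ν' =>
    permanent (Matrix.of fun k l => S (repFun ν k) (repFun ν' l)) /
      (Real.sqrt ((∏ i, (ν.1 i).factorial * (ν'.1 i).factorial : ℕ) : ℝ) : ℂ)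

/-- Relabeling an occupation tuple by (precomposition with) a permutation of the modes. -/
def permIdx {n : ℕ} (σ : Equiv.Perm α) (ν : BosonIdx α n) : BosonIdx α n :=
  ⟨ν.1 ∘ σ, show ∑ i, ν.1 (σ i) = n from (Equiv.sum_comp σ ν.1).trans ν.2⟩

/-- The occupation tuple placing `2` photons in mode `(x j, j)` for each `j : ZMod m`. -/
def nuX (m : ℕ) [NeZero m] (x : ZMod m → Fin 2) : BosonIdx (Fin 2 × ZMod m) (2 * m) :=
  ⟨fun p => if p.1 = x p.2 then 2 else 0, by
    rw [Fintype.sum_prod_type, Finset.sum_comm]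
    have h : ∀ j : ZMod m, (∑ a : Fin 2, if a = x j then 2 else 0) = 2 := by
      intro j; simp [Finset.sum_ite_eq]
    simp [h, Finset.sum_const, mul_comm]⟩


open Equiv

section Counting
variable {γ β : Type*} [Fintype γ] [DecidableEq γ] [Fintype β] [DecidableEq β]

lemma card_fiber_comp (f g : γ → β) (σ : Equiv.Perm γ) (hσ : f ∘ σ = g) (i : β) :
    Fintype.card {k // g k = i} = Fintype.card {k // f k = i} :=
  Fintype.card_congr (σ.subtypeEquiv (p := fun k => g k = i) (q := fun k => f k = i)
    (fun k => by rw [← hσ]; exact Iff.rfl))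

lemma card_comp_eq_perm (f g : γ → β)
    (hcnt : ∀ i, Fintype.card {k // f k = i} = Fintype.card {k // g k = i}) :
    Fintype.card {σ : Equiv.Perm γ // f ∘ σ = g}
      = ∏ i, Nat.factorial (Fintype.card {k // f k = i}) := by
  obtain ⟨σ₀, hσ₀⟩ : ∃ σ₀ : Equiv.Perm γ, f ∘ σ₀ = g := by
    refine ⟨(sigmaFiberEquiv g).symm.trans ((Equiv.sigmaCongrRight fun i =>
      Fintype.equivOfCardEq ((hcnt i).symm)).trans (sigmaFiberEquiv f)), funext fun l => ?_⟩
    exact ((Fintype.equivOfCardEq ((hcnt (g l)).symm)) ⟨l, rfl⟩).2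
  have e2 : {σ : Equiv.Perm γ // f ∘ σ = g} ≃ {σ : Equiv.Perm γ // f ∘ σ = f} :=
    { toFun := fun σ => ⟨σ.1 * σ₀⁻¹, funext fun k => by
        show f (σ.1 (σ₀⁻¹ k)) = f k
        have h1 : f (σ.1 (σ₀⁻¹ k)) = g (σ₀⁻¹ k) := congrFun σ.2 (σ₀⁻¹ k)
        have h2 : f (σ₀ (σ₀⁻¹ k)) = g (σ₀⁻¹ k) := congrFun hσ₀ (σ₀⁻¹ k)
        rw [h1, ← h2, Equiv.Perm.coe_inv, Equiv.apply_symm_apply]⟩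
      invFun := fun τ => ⟨τ.1 * σ₀, funext fun k =>
        (show f (τ.1 (σ₀ k)) = f (σ₀ k) from congrFun τ.2 (σ₀ k)).trans (congrFun hσ₀ k)⟩
      left_inv := fun σ => Subtype.ext (by simp [mul_assoc])
      right_inv := fun τ => Subtype.ext (by simp [mul_assoc]) }
  rw [Fintype.card_congr e2, DomMulAct.stabilizer_card]

lemma card_comp_ne_perm (f g : γ → β) (i : β)
    (hne : Fintype.card {k // f k = i} ≠ Fintype.card {k // g k = i}) :
    Fintype.card {σ : Equiv.Perm γ // f ∘ σ = g} = 0 :=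
  Fintype.card_eq_zero_iff.mpr ⟨fun σ => hne (card_fiber_comp f g σ.1 σ.2 i).symm⟩

lemma prod_comp_card (u : γ → β) (c : β → ℂ) :
    ∏ k, c (u k) = ∏ i, c i ^ (Fintype.card {k // u k = i}) := by
  rw [← Fintype.prod_fiberwise' u c]
  exact Finset.prod_congr rfl fun i _ => by rw [Finset.prod_const]; rfl

end Counting

open Finset Nat

set_option linter.unusedSectionVars false
set_option maxHeartbeats 1000000

lemma count_repList (ν : α → ℕ) (i : α) : (repList ν).count i = ν i := by
  rw [repList, List.count_flatMap]
  have h1 : (List.count i ∘ fun j => List.replicate (ν j) j)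
      = fun j => if j = i then ν j else 0 := by
    funext j; simp [List.count_replicate]
  rw [h1, Finset.sum_map_toList]
  simp

lemma card_fiber_get (L : List α) (i : α) :
    Fintype.card {k : Fin L.length // L.get k = i} = L.count i := by
  have hm : Multiset.map L.get (univ : Finset (Fin L.length)).val = (L : Multiset α) := by
    rw [Fin.univ_def]
    show Multiset.map L.get (↑(List.finRange L.length) : Multiset (Fin L.length)) = _
    rw [Multiset.map_coe, ← List.ofFn_eq_map, List.ofFn_get]
  rw [Fintype.card_subtype]
  calc (univ.filter fun k => L.get k = i).card
      = (Multiset.filter (fun k => L.get k = i) univ.val).card := rfl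
    _ = (Multiset.filter (fun k => i = L.get k) univ.val).card := by
        rw [Multiset.filter_congr (fun x _ => by constructor <;> exact Eq.symm)]
    _ = Multiset.count i (Multiset.map L.get univ.val) := (Multiset.count_map _ _ _).symm
    _ = L.count i := by rw [hm, Multiset.coe_count]

lemma card_fiber_repFun {n : ℕ} (ν : BosonIdx α n) (i : α) :
    Fintype.card {k : Fin n // repFun ν k = i} = ν.1 i := by
  have e : {k : Fin n // repFun ν k = i} ≃ {k : Fin (repList ν.1).length // (repList ν.1).get k = i} :=
    (finCongr ((repList_length ν.1).trans ν.2).symm).subtypeEquiv (fun k => Iff.rfl)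
  rw [Fintype.card_congr e, card_fiber_get, count_repList]

lemma permIdx_eq_iff {n : ℕ} (π : Equiv.Perm α) (ν ν' : BosonIdx α n) :
    ν' = permIdx π ν ↔ ∀ i, ν.1 i = ν'.1 (π⁻¹ i) := by
  constructor
  · intro h i
    rw [h]
    show ν.1 i = ν.1 (π (π⁻¹ i))
    rw [Equiv.Perm.coe_inv, Equiv.apply_symm_apply]
  · intro h
    refine Subtype.ext (funext fun j => ?_)
    have := h (π j)
    rw [Equiv.Perm.coe_inv, Equiv.symm_apply_apply] at this
    exact this.symm

lemma bosonRep_genPerm {n : ℕ} (π : Equiv.Perm α) (c : α → ℂ) (ν ν' : BosonIdx α n) :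
    bosonRep n (Matrix.of fun p q => if p = π q then c p else 0) ν ν'
      = if ν' = permIdx π ν then ∏ i, c i ^ ν.1 i else 0 := by
  have hfib_f : ∀ i, Fintype.card {k : Fin n // repFun ν k = i} = ν.1 i := card_fiber_repFun ν
  have hfib_h : ∀ i, Fintype.card {k : Fin n // (π ∘ repFun ν') k = i} = ν'.1 (π⁻¹ i) := by
    intro i
    rw [← card_fiber_repFun ν' (π⁻¹ i)]
    exact Fintype.card_congr (Equiv.subtypeEquivRight (fun l => by
      simp only [Function.comp_apply]
      rw [Equiv.apply_eq_iff_eq_symm_apply]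
      exact Iff.rfl))
  have hper : permanent (Matrix.of fun k l =>
        (Matrix.of fun p q => if p = π q then c p else 0) (repFun ν k) (repFun ν' l))
      = (Fintype.card {σ : Equiv.Perm (Fin n) // repFun ν ∘ σ = π ∘ repFun ν'} : ℂ)
        * ∏ l, c ((π ∘ repFun ν') l) := by
    rw [permanent]
    have hterm : ∀ σ : Equiv.Perm (Fin n),
        (∏ l, (Matrix.of fun k l => (Matrix.of fun p q => if p = π q then c p else 0)
            (repFun ν k) (repFun ν' l)) (σ l) l)
          = if repFun ν ∘ σ = π ∘ repFun ν' then ∏ l, c ((π ∘ repFun ν') l) else 0 := by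
      intro σ
      by_cases hσ : repFun ν ∘ σ = π ∘ repFun ν'
      · rw [if_pos hσ]
        refine Finset.prod_congr rfl fun l _ => ?_
        have e1 : repFun ν (σ l) = π (repFun ν' l) := congrFun hσ l
        simp only [Matrix.of_apply, Function.comp_apply]
        rw [if_pos e1, e1]
      · rw [if_neg hσ]
        have : ∃ l, ¬ (repFun ν (σ l) = π (repFun ν' l)) := by
          by_contra hall; push_neg at hall; exact hσ (funext hall)
        obtain ⟨l₀, hl₀⟩ := this
        exact Finset.prod_eq_zero (Finset.mem_univ l₀)
          (by simp only [Matrix.of_apply]; rw [if_neg hl₀])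
    rw [Finset.sum_congr rfl fun σ _ => hterm σ, ← Finset.sum_filter,
      Finset.sum_const, nsmul_eq_mul, Fintype.card_subtype]
  by_cases hc : ν' = permIdx π ν
  · rw [if_pos hc]
    have hν' : ν'.1 = ν.1 ∘ π := by rw [hc]; rfl
    have hcnt : ∀ i, Fintype.card {k : Fin n // repFun ν k = i}
        = Fintype.card {k : Fin n // (π ∘ repFun ν') k = i} := by
      intro i
      rw [hfib_f, hfib_h, hν']
      show ν.1 i = ν.1 (π (π⁻¹ i))
      rw [Equiv.Perm.coe_inv, Equiv.apply_symm_apply]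
    have hcard : Fintype.card {σ : Equiv.Perm (Fin n) // repFun ν ∘ σ = π ∘ repFun ν'}
        = ∏ i, (ν.1 i).factorial := by
      rw [card_comp_eq_perm _ _ hcnt]
      exact Finset.prod_congr rfl fun i _ => congrArg Nat.factorial (hfib_f i)
    have hW : (∏ l, c ((π ∘ repFun ν') l)) = ∏ i, c i ^ ν.1 i := by
      rw [prod_comp_card (π ∘ repFun ν') c]
      refine Finset.prod_congr rfl fun i _ => ?_
      rw [hfib_h, hν']
      show c i ^ ν.1 (π (π⁻¹ i)) = _
      rw [Equiv.Perm.coe_inv, Equiv.apply_symm_apply]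
    have hK : (∏ i, (ν.1 i).factorial * (ν'.1 i).factorial : ℕ)
        = (∏ i, (ν.1 i).factorial) * (∏ i, (ν.1 i).factorial) := by
      rw [Finset.prod_mul_distrib]
      congr 1
      rw [hν']
      exact Equiv.prod_comp π (fun i => (ν.1 i).factorial)
    have hden : (Real.sqrt ((∏ i, (ν.1 i).factorial * (ν'.1 i).factorial : ℕ) : ℝ) : ℂ)
        = ((∏ i, (ν.1 i).factorial : ℕ) : ℂ) := by
      rw [hK, Nat.cast_mul, Real.sqrt_mul_self (Nat.cast_nonneg _)]
      norm_cast
    have hK0 : ((∏ i, (ν.1 i).factorial : ℕ) : ℂ) ≠ 0 :=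
      Nat.cast_ne_zero.mpr (Finset.prod_pos fun i _ => Nat.factorial_pos _).ne'
    rw [bosonRep, Matrix.of_apply, hper, hcard, hW, hden, mul_comm, mul_div_assoc,
      div_self hK0, mul_one]
  · rw [if_neg hc]
    have : ∃ i, ν.1 i ≠ ν'.1 (π⁻¹ i) := by
      by_contra hall; push_neg at hall; exact hc ((permIdx_eq_iff π ν ν').mpr hall)
    obtain ⟨i, hi⟩ := this
    have hcard : Fintype.card {σ : Equiv.Perm (Fin n) // repFun ν ∘ σ = π ∘ repFun ν'} = 0 := by
      apply card_comp_ne_perm _ _ i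
      rw [hfib_f, hfib_h]
      exact hi
    rw [bosonRep, Matrix.of_apply, hper, hcard]
    simp

lemma permIdx_permIdx {n : ℕ} (σ τ : Equiv.Perm α) (ν : BosonIdx α n) :
    permIdx τ (permIdx σ ν) = permIdx (σ * τ) ν := Subtype.ext rfl

lemma permIdx_one {n : ℕ} (ν : BosonIdx α n) : permIdx (1 : Equiv.Perm α) ν = ν :=
  Subtype.ext rfl

lemma permIdx_injective {n : ℕ} (σ : Equiv.Perm α) :
    Function.Injective (permIdx (α := α) (n := n) σ) := by
  intro ν ν' h
  have h2 := congrArg (permIdx σ⁻¹) h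
  rwa [permIdx_permIdx, permIdx_permIdx, mul_inv_cancel, permIdx_one, permIdx_one] at h2

section Main

variable (m : ℕ) [NeZero m]

def shiftPerm (k : ℕ) : Equiv.Perm (Fin 2 × ZMod m) :=
  Equiv.prodCongr (Equiv.refl (Fin 2)) (Equiv.addRight ((k : ℕ) : ZMod m))

lemma shiftPerm_apply (k : ℕ) (x : Fin 2 × ZMod m) :
    shiftPerm m k x = (x.1, x.2 + ((k : ℕ) : ZMod m)) := rfl

lemma shiftPerm_fst (k : ℕ) (x : Fin 2 × ZMod m) : (shiftPerm m k x).1 = x.1 := rfl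

lemma shiftPerm_shiftPerm (k l : ℕ) (q : Fin 2 × ZMod m) :
    shiftPerm m k (shiftPerm m l q) = shiftPerm m (k + l) q := by
  rw [Prod.ext_iff]
  refine ⟨rfl, ?_⟩
  show q.2 + (l : ZMod m) + (k : ZMod m) = q.2 + ((k + l : ℕ) : ZMod m)
  rw [Nat.cast_add]
  ring

lemma shiftPerm_zero : shiftPerm m 0 = 1 := by
  refine Equiv.ext fun q => ?_
  rw [shiftPerm_apply]
  simp

lemma shiftPerm_m : shiftPerm m m = 1 := by
  refine Equiv.ext fun q => ?_
  rw [shiftPerm_apply]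
  simp [ZMod.natCast_self]

lemma shiftPerm_mul (k l : ℕ) : shiftPerm m k * shiftPerm m l = shiftPerm m (k + l) :=
  Equiv.ext fun q => shiftPerm_shiftPerm m k l q

lemma shiftPerm_pow (t : ℕ) : (shiftPerm m 1) ^ t = shiftPerm m t := by
  induction t with
  | zero => rw [pow_zero, shiftPerm_zero]
  | succ t ih => rw [pow_succ, ih, shiftPerm_mul]

lemma shiftPerm_inv_pow : (shiftPerm m 1)⁻¹ ^ (m - 1) = shiftPerm m 1 := by
  rw [inv_pow]
  apply inv_eq_of_mul_eq_one_right
  rw [← pow_succ, Nat.sub_add_cancel (Nat.one_le_iff_ne_zero.mpr (NeZero.ne m)),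
    shiftPerm_pow, shiftPerm_m]

def GP (k a : ℕ) : Matrix (Fin 2 × ZMod m) (Fin 2 × ZMod m) ℂ :=
  Matrix.of fun p q => if p = shiftPerm m k q then (-1 : ℂ) ^ (a * (p.1 : ℕ)) else 0

lemma GP_one : GP m 0 0 = 1 := by
  ext p q
  simp [GP, shiftPerm_zero, Matrix.one_apply]

lemma GP_mul (k l a b : ℕ) : GP m k a * GP m l b = GP m (k + l) (a + b) := by
  ext p q
  rw [Matrix.mul_apply, Finset.sum_eq_single (shiftPerm m l q)]
  · by_cases hp : p = shiftPerm m (k + l) q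
    · have hp' : p = shiftPerm m k (shiftPerm m l q) := by
        rw [shiftPerm_shiftPerm]; exact hp
      subst hp'
      have h3 : shiftPerm m k (shiftPerm m l q) = shiftPerm m (k + l) q :=
        shiftPerm_shiftPerm m k l q
      simp [GP, h3, shiftPerm_fst, ← pow_add, ← add_mul]
    · have hp' : ¬ (p = shiftPerm m k (shiftPerm m l q)) := by
        rw [shiftPerm_shiftPerm]; exact hp
      simp only [GP, Matrix.of_apply]
      rw [if_neg hp', if_neg hp, zero_mul]
  · intro r _ hr
    simp only [GP, Matrix.of_apply]
    rw [if_neg hr, mul_zero]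
  · intro h
    exact absurd (Finset.mem_univ _) h

lemma closure_GP (g₁ g₂ : Matrix (Fin 2 × ZMod m) (Fin 2 × ZMod m) ℂ)
    (hg₁ : g₁ = Matrix.diagonal fun p => (-1 : ℂ) ^ (p.1 : ℕ))
    (hg₂ : g₂ = Matrix.of fun p q => if p = (q.1, q.2 + 1) then 1 else 0) :
    ∀ g ∈ Submonoid.closure {g₁, g₂}, ∃ k a, g = GP m k a := by
  have hg₁' : g₁ = GP m 0 1 := by
    rw [hg₁]
    ext p q
    simp [GP, shiftPerm_zero, Matrix.diagonal_apply, eq_comm]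
  have hg₂' : g₂ = GP m 1 0 := by
    rw [hg₂]
    ext p q
    simp [GP, shiftPerm_apply]
  intro g hg
  induction hg using Submonoid.closure_induction with
  | mem x hx =>
    rcases hx with h | h
    · exact ⟨0, 1, by rw [h, hg₁']⟩
    · exact ⟨1, 0, by rw [h, hg₂']⟩
  | one => exact ⟨0, 0, (GP_one m).symm⟩
  | mul x y _ _ hx hy =>
    obtain ⟨k, a, rfl⟩ := hx
    obtain ⟨l, b, rfl⟩ := hy
    exact ⟨k + l, a + b, GP_mul m k l a b⟩

end Main

open scoped Matrix

section Main2
variable (m : ℕ) [NeZero m]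

lemma bosonRep_GP (k a : ℕ) (ν ν' : BosonIdx (Fin 2 × ZMod m) (2 * m)) :
    bosonRep (2 * m) (GP m k a) ν ν'
      = if ν' = permIdx (shiftPerm m k) ν then
          ∏ p : Fin 2 × ZMod m, ((-1 : ℂ) ^ (a * (p.1 : ℕ))) ^ ν.1 p
        else 0 :=
  bosonRep_genPerm (shiftPerm m k) (fun p => (-1 : ℂ) ^ (a * (p.1 : ℕ))) ν ν'

lemma mulVec_GP (k a : ℕ) (w : BosonIdx (Fin 2 × ZMod m) (2 * m) → ℂ)
    (ν : BosonIdx (Fin 2 × ZMod m) (2 * m)) :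
    ((bosonRep (2 * m) (GP m k a)).mulVec w) ν
      = (∏ p : Fin 2 × ZMod m, ((-1 : ℂ) ^ (a * (p.1 : ℕ))) ^ ν.1 p)
          * w (permIdx (shiftPerm m k) ν) := by
  show (∑ ν', bosonRep (2 * m) (GP m k a) ν ν' * w ν') = _
  rw [Finset.sum_congr rfl fun ν' _ => by rw [bosonRep_GP, ite_mul, zero_mul]]
  simp

lemma nuX_injective : Function.Injective (nuX m) := by
  intro x y h
  funext j
  have h2 : (if x j = x j then 2 else 0) = (if x j = y j then 2 else 0) :=
    congrFun (congrArg Subtype.val h) (x j, j)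
  rw [if_pos rfl] at h2
  by_contra hne
  rw [if_neg hne] at h2
  omega

lemma permIdx_shiftPerm_nuX (k : ℕ) (x : ZMod m → Fin 2) :
    permIdx (shiftPerm m k) (nuX m x) = nuX m (fun j => x (j + ((k : ℕ) : ZMod m))) :=
  Subtype.ext rfl

lemma eps_nuX (a : ℕ) (x : ZMod m → Fin 2) :
    (∏ p : Fin 2 × ZMod m, ((-1 : ℂ) ^ (a * (p.1 : ℕ))) ^ (nuX m x).1 p) = 1 := by
  refine Finset.prod_eq_one fun p _ => ?_
  show ((-1 : ℂ) ^ (a * (p.1 : ℕ))) ^ (if p.1 = x p.2 then 2 else 0) = 1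
  by_cases hp : p.1 = x p.2
  · rw [if_pos hp, ← pow_mul]
    exact Even.neg_one_pow ⟨a * (p.1 : ℕ), by ring⟩
  · rw [if_neg hp, pow_zero]

def trEquiv (k : ZMod m) : (ZMod m → Fin 2) ≃ (ZMod m → Fin 2) where
  toFun y := fun j => y (j + k)
  invFun y := fun j => y (j - k)
  left_inv y := funext fun j => by show y (j - k + k) = y j; rw [sub_add_cancel]
  right_inv y := funext fun j => by show y (j + k - k) = y j; rw [add_sub_cancel_right]

lemma shift_cond_iff (k : ℕ) (ν : BosonIdx (Fin 2 × ZMod m) (2 * m)) (y : ZMod m → Fin 2) :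
    (permIdx (shiftPerm m k) ν = nuX m (fun j => y (j + ((k : ℕ) : ZMod m)))) ↔ ν = nuX m y := by
  rw [← permIdx_shiftPerm_nuX]
  exact ⟨fun h => permIdx_injective _ h, fun h => by rw [h]⟩

lemma sum_shift (k : ℕ) (C : (ZMod m → Fin 2) → ℂ)
    (hC : ∀ x : ZMod m → Fin 2, C (fun j => x (j + ((k : ℕ) : ZMod m))) = C x)
    (ν : BosonIdx (Fin 2 × ZMod m) (2 * m)) :
    (∑ x, C x * (if permIdx (shiftPerm m k) ν = nuX m x then 1 else 0))
      = ∑ x, C x * (if ν = nuX m x then 1 else 0) := by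
  rw [← Equiv.sum_comp (trEquiv m ((k : ℕ) : ZMod m))
    (fun x => C x * (if permIdx (shiftPerm m k) ν = nuX m x then 1 else 0))]
  refine Finset.sum_congr rfl fun y _ => ?_
  have hT : (trEquiv m ((k : ℕ) : ZMod m)) y = fun j => y (j + ((k : ℕ) : ZMod m)) := rfl
  rw [hT, hC y]
  congr 1
  simp only [shift_cond_iff]

lemma GP_fixes (k a : ℕ) (C : (ZMod m → Fin 2) → ℂ)
    (hC : ∀ x : ZMod m → Fin 2, C (fun j => x (j + ((k : ℕ) : ZMod m))) = C x) :
    (bosonRep (2 * m) (GP m k a)).mulVec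
        (fun ν => ∑ x, C x * (if ν = nuX m x then 1 else 0))
      = fun ν => ∑ x, C x * (if ν = nuX m x then 1 else 0) := by
  funext ν
  rw [mulVec_GP]
  show (∏ p : Fin 2 × ZMod m, ((-1 : ℂ) ^ (a * (p.1 : ℕ))) ^ ν.1 p)
      * (∑ x, C x * (if permIdx (shiftPerm m k) ν = nuX m x then 1 else 0))
      = ∑ x, C x * (if ν = nuX m x then 1 else 0)
  rw [sum_shift m k C hC ν]
  by_cases hex : ∃ y, ν = nuX m y
  · obtain ⟨y, rfl⟩ := hex
    rw [eps_nuX, one_mul]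
  · have hz : (∑ x, C x * (if ν = nuX m x then 1 else 0)) = 0 :=
      Finset.sum_eq_zero fun x _ => by rw [if_neg (fun h => hex ⟨x, h⟩), mul_zero]
    rw [hz, mul_zero]

def Amat (σ : Equiv.Perm (Fin 2 × ZMod m)) :
    Matrix (BosonIdx (Fin 2 × ZMod m) (2 * m)) (BosonIdx (Fin 2 × ZMod m) (2 * m)) ℂ :=
  Matrix.of fun ν ν' => if ν' = permIdx σ ν then 1 else 0

lemma bosonRep_g₂ : bosonRep (2 * m) (GP m 1 0) = Amat m (shiftPerm m 1) := by
  ext ν ν'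
  rw [bosonRep_GP]
  simp [Amat]

lemma Amat_mul (σ τ : Equiv.Perm (Fin 2 × ZMod m)) :
    Amat m σ * Amat m τ = Amat m (σ * τ) := by
  ext ν ν''
  rw [Matrix.mul_apply, Finset.sum_eq_single (permIdx σ ν)]
  · rw [show Amat m σ ν (permIdx σ ν) = 1 from by simp [Amat], one_mul]
    simp [Amat, permIdx_permIdx]
  · intro r _ hr
    rw [show Amat m σ ν r = 0 from by simp [Amat, hr], zero_mul]
  · exact fun h => absurd (Finset.mem_univ _) h

lemma Amat_one : Amat m 1 = 1 := by
  ext ν ν'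
  simp [Amat, permIdx_one, Matrix.one_apply, eq_comm]

lemma Amat_conjT (σ : Equiv.Perm (Fin 2 × ZMod m)) : (Amat m σ)ᴴ = Amat m σ⁻¹ := by
  have hcond : ∀ ν ν' : BosonIdx (Fin 2 × ZMod m) (2 * m), (ν = permIdx σ ν') ↔ (ν' = permIdx σ⁻¹ ν) := by
    intro ν ν'
    constructor
    · intro h; rw [h, permIdx_permIdx, mul_inv_cancel, permIdx_one]
    · intro h; rw [h, permIdx_permIdx, inv_mul_cancel, permIdx_one]
  ext ν ν'
  rw [Matrix.conjTranspose_apply]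
  by_cases h : ν = permIdx σ ν'
  · rw [show Amat m σ ν' ν = 1 from by simp [Amat, h],
      show Amat m σ⁻¹ ν ν' = 1 from by simp [Amat, (hcond ν ν').mp h], star_one]
  · have h2 : ¬ ν' = permIdx σ⁻¹ ν := fun hh => h ((hcond ν ν').mpr hh)
    rw [show Amat m σ ν' ν = 0 from by simp [Amat, h],
      show Amat m σ⁻¹ ν ν' = 0 from by simp [Amat, h2], star_zero]

lemma Amat_mulVec (σ : Equiv.Perm (Fin 2 × ZMod m)) (z : BosonIdx (Fin 2 × ZMod m) (2 * m) → ℂ) :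
    (Amat m σ).mulVec z = fun ν => z (permIdx σ ν) := by
  funext ν
  show (∑ ν', Amat m σ ν ν' * z ν') = _
  rw [Finset.sum_congr rfl fun ν' _ =>
    by rw [show Amat m σ ν ν' = if ν' = permIdx σ ν then 1 else 0 from rfl, ite_mul, one_mul, zero_mul]]
  simp

end Main2

section SumSq
variable (m : ℕ) [NeZero m]

lemma t_sq (b : Fin 2) : ((1 : ℝ) - 2 * ((b : ℕ) : ℝ)) * ((1 : ℝ) - 2 * ((b : ℕ) : ℝ)) = 1 := by
  fin_cases b <;> norm_num

lemma t_swap (b : Fin 2) : (1 : ℝ) - 2 * (((Equiv.swap (0 : Fin 2) 1 b : Fin 2) : ℕ) : ℝ)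
    = -((1 : ℝ) - 2 * ((b : ℕ) : ℝ)) := by
  fin_cases b <;> simp <;> norm_num

lemma card_fun_zmod : Fintype.card (ZMod m → Fin 2) = 2 ^ m := by
  rw [Fintype.card_fun, ZMod.card, Fintype.card_fin]

lemma sum_sq_key :
    ∑ y : ZMod m → Fin 2, ((m : ℝ) - 2 * (∑ j, ((y j : ℕ) : ℝ))) ^ 2 = (m : ℝ) * 2 ^ m := by
  have hsplit : ∀ y : ZMod m → Fin 2, (m : ℝ) - 2 * (∑ j, ((y j : ℕ) : ℝ))
      = ∑ j : ZMod m, (1 - 2 * ((y j : ℕ) : ℝ)) := by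
    intro y
    rw [Finset.sum_sub_distrib, Finset.sum_const, Finset.card_univ, ZMod.card, ← Finset.mul_sum]
    simp [nsmul_eq_mul]
  calc ∑ y : ZMod m → Fin 2, ((m : ℝ) - 2 * ∑ j, ((y j : ℕ) : ℝ)) ^ 2
      = ∑ y : ZMod m → Fin 2, ∑ j : ZMod m, ∑ j' : ZMod m,
          (1 - 2 * ((y j : ℕ) : ℝ)) * (1 - 2 * ((y j' : ℕ) : ℝ)) := by
        refine Finset.sum_congr rfl fun y _ => ?_
        rw [hsplit y, sq, Finset.sum_mul_sum]
    _ = ∑ j : ZMod m, ∑ j' : ZMod m, ∑ y : ZMod m → Fin 2,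
          (1 - 2 * ((y j : ℕ) : ℝ)) * (1 - 2 * ((y j' : ℕ) : ℝ)) := by
        rw [Finset.sum_comm]
        exact Finset.sum_congr rfl fun j _ => Finset.sum_comm
    _ = ∑ j : ZMod m, ∑ j' : ZMod m, (if j = j' then (2 : ℝ) ^ m else 0) := by
        refine Finset.sum_congr rfl fun j _ => Finset.sum_congr rfl fun j' _ => ?_
        by_cases hjj : j = j'
        · subst hjj
          rw [if_pos rfl, Finset.sum_congr rfl fun y _ => t_sq (y j),
            Finset.sum_const, Finset.card_univ, card_fun_zmod]
          simp
        · rw [if_neg hjj]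
          set e : (ZMod m → Fin 2) ≃ (ZMod m → Fin 2) :=
            Equiv.piCongrRight (fun i =>
              if i = j then Equiv.swap (0 : Fin 2) 1 else Equiv.refl (Fin 2)) with he
          set F : (ZMod m → Fin 2) → ℝ :=
            fun y => (1 - 2 * ((y j : ℕ) : ℝ)) * (1 - 2 * ((y j' : ℕ) : ℝ)) with hF
          have hej : ∀ y, e y j = Equiv.swap (0 : Fin 2) 1 (y j) := by
            intro y
            show (if j = j then Equiv.swap (0 : Fin 2) 1 else Equiv.refl (Fin 2)) (y j) = _
            rw [if_pos rfl]
          have hej' : ∀ y, e y j' = y j' := by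
            intro y
            show (if j' = j then Equiv.swap (0 : Fin 2) 1 else Equiv.refl (Fin 2)) (y j') = _
            rw [if_neg (fun h => hjj h.symm)]
            rfl
          have h1 : ∀ y, F (e y) = -F y := by
            intro y
            show (1 - 2 * (((e y) j : ℕ) : ℝ)) * (1 - 2 * (((e y) j' : ℕ) : ℝ)) = _
            rw [hej, hej', t_swap]
            show _ = -((1 - 2 * ((y j : ℕ) : ℝ)) * (1 - 2 * ((y j' : ℕ) : ℝ)))
            ring
          have h2 : ∑ y, F y = ∑ y, F (e y) := (Equiv.sum_comp e F).symm
          have h3 : ∑ y, F (e y) = -∑ y, F y := by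
            rw [Finset.sum_congr rfl fun y _ => h1 y, Finset.sum_neg_distrib]
          have h4 : ∑ y, F y = 0 := by
            have := h2.trans h3
            linarith
          exact h4
    _ = (m : ℝ) * 2 ^ m := by
        rw [Finset.sum_congr rfl fun j (_ : j ∈ Finset.univ) =>
          (Finset.sum_ite_eq Finset.univ j (fun _ => (2 : ℝ) ^ m)),
          Finset.sum_congr rfl fun j (_ : j ∈ Finset.univ) => if_pos (Finset.mem_univ j),
          Finset.sum_const, Finset.card_univ, ZMod.card, nsmul_eq_mul]

lemma sum_zmod_range (f : ZMod m → ℂ) :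
    ∑ t ∈ Finset.range m, f ((t : ℕ) : ZMod m) = ∑ c : ZMod m, f c := by
  refine Finset.sum_bij' (fun t _ => ((t : ℕ) : ZMod m)) (fun c _ => c.val) ?_ ?_ ?_ ?_ ?_
  · intro t _; exact Finset.mem_univ _
  · intro c _; exact Finset.mem_range.mpr (ZMod.val_lt c)
  · intro t ht; exact ZMod.val_cast_of_lt (Finset.mem_range.mp ht)
  · intro c _; exact ZMod.natCast_rightInverse c
  · intro t _; rfl

end SumSq

section Main3
variable (m : ℕ) [NeZero m]

lemma sum_shift' (k : ℕ) (D : (ZMod m → Fin 2) → ℂ)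
    (ν : BosonIdx (Fin 2 × ZMod m) (2 * m)) :
    (∑ x, D x * (if permIdx (shiftPerm m k) ν = nuX m x then 1 else 0))
      = ∑ x, D (fun j => x (j + ((k : ℕ) : ZMod m))) * (if ν = nuX m x then 1 else 0) := by
  rw [← Equiv.sum_comp (trEquiv m ((k : ℕ) : ZMod m))
    (fun x => D x * (if permIdx (shiftPerm m k) ν = nuX m x then 1 else 0))]
  refine Finset.sum_congr rfl fun y _ => ?_
  have hT : (trEquiv m ((k : ℕ) : ZMod m)) y = fun j => y (j + ((k : ℕ) : ZMod m)) := rfl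
  rw [hT]
  congr 1
  simp only [shift_cond_iff]

lemma mulVec_sumgen {n' : Type*} [Fintype n'] {ι : Type*} (M : Matrix n' n' ℂ)
    (s : Finset ι) (f : ι → n' → ℂ) :
    M.mulVec (∑ t ∈ s, f t) = ∑ t ∈ s, M.mulVec (f t) := by
  simp only [← Matrix.mulVecLin_apply]
  exact map_sum _ _ _

lemma neg_one_pow_fin2 (b : Fin 2) : (-1 : ℂ) ^ ((b : ℕ)) = 1 - 2 * ((b : ℕ) : ℂ) := by
  fin_cases b <;> norm_num

end Main3

/-- For the state `v = |β⁺⟩|β⁻⟩^{⊗(m−1)}` of the Bell-discrimination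
scheme, the measurement of the stabilizer group `G = ⟨Z₂ ⊗ I_m, I₂ ⊗ X_m⟩` (generated by the
sign flip `g₁` and the cyclic mode shift `g₂`) yields the all-eigenvalues-one outcome with
probability `‖P v‖² = 1/m`. -/
theorem bell_ancilla_projection_probability (m : ℕ) [NeZero m]
    (g₁ g₂ : Matrix (Fin 2 × ZMod m) (Fin 2 × ZMod m) ℂ)
    (hg₁ : g₁ = Matrix.diagonal fun p => (-1 : ℂ) ^ (p.1 : ℕ))
    (hg₂ : g₂ = Matrix.of fun p q => if p = (q.1, q.2 + 1) then 1 else 0)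
    (v : BosonIdx (Fin 2 × ZMod m) (2 * m) → ℂ)
    (hv : v = ((Real.sqrt 2 ^ m : ℝ) : ℂ)⁻¹ •
      ∑ x : ZMod m → Fin 2, (∏ j ∈ Finset.univ.erase (0 : ZMod m), (-1 : ℂ) ^ (x j : ℕ)) •
        (Pi.single (nuX m x) (1 : ℂ) : BosonIdx (Fin 2 × ZMod m) (2 * m) → ℂ))
    (P : Matrix (BosonIdx (Fin 2 × ZMod m) (2 * m)) (BosonIdx (Fin 2 × ZMod m) (2 * m)) ℂ)
    -- `P` is the orthogonal projection onto the joint `+1`-eigenspace of `B(G)`: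
    (hP1 : P.IsHermitian) (hP2 : P * P = P)
    (hP3 : ∀ w : BosonIdx (Fin 2 × ZMod m) (2 * m) → ℂ,
      P.mulVec w = w ↔ ∀ g ∈ Submonoid.closure {g₁, g₂},
        (bosonRep (2 * m) g).mulVec w = w) :
    ∑ ν : BosonIdx (Fin 2 × ZMod m) (2 * m), ‖(P.mulVec v) ν‖ ^ 2 =
      1 / m := by
  classical
  have hm : (m : ℂ) ≠ 0 := Nat.cast_ne_zero.mpr (NeZero.ne m)
  have hmR : (m : ℝ) ≠ 0 := Nat.cast_ne_zero.mpr (NeZero.ne m)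
  set c₀ : ℂ := ((Real.sqrt 2 ^ m : ℝ) : ℂ) with hc₀
  set S : (ZMod m → Fin 2) → ℂ := fun x =>
    c₀⁻¹ * ∏ j ∈ Finset.univ.erase (0 : ZMod m), (-1 : ℂ) ^ (x j : ℕ) with hS
  set C : (ZMod m → Fin 2) → ℂ := fun x =>
    c₀⁻¹ * ((-1 : ℂ) ^ (∑ j, (x j : ℕ))
      * (((m : ℂ) - 2 * ((∑ j, (x j : ℕ) : ℕ) : ℂ)) / m)) with hC
  set w : BosonIdx (Fin 2 × ZMod m) (2 * m) → ℂ :=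
    fun ν => ∑ x, C x * (if ν = nuX m x then 1 else 0) with hw
  have hv' : ∀ ν, v ν = ∑ x, S x * (if ν = nuX m x then 1 else 0) := by
    intro ν
    rw [hv]
    simp only [Pi.smul_apply, Finset.sum_apply, smul_eq_mul, Pi.single_apply, Finset.mul_sum, hS]
    exact Finset.sum_congr rfl fun x _ => by ring
  have key : ∀ x : ZMod m → Fin 2,
      (1 / m : ℂ) * ∑ t ∈ Finset.range m, S (fun j => x (j + ((t : ℕ) : ZMod m))) = C x := by
    intro x
    have hSx : ∀ t : ℕ, S (fun j => x (j + ((t : ℕ) : ZMod m)))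
        = (c₀⁻¹ * (-1 : ℂ) ^ (∑ j, (x j : ℕ))) * (-1 : ℂ) ^ ((x ((t : ℕ) : ZMod m) : ℕ)) := by
      intro t
      have hA2 : (-1 : ℂ) ^ ((x ((t : ℕ) : ZMod m) : ℕ))
          * (-1 : ℂ) ^ ((x ((t : ℕ) : ZMod m) : ℕ)) = 1 := by
        rw [← pow_add]
        exact Even.neg_one_pow ⟨_, rfl⟩
      have hfull : (-1 : ℂ) ^ ((x ((t : ℕ) : ZMod m) : ℕ))
          * ∏ j ∈ Finset.univ.erase (0 : ZMod m), (-1 : ℂ) ^ ((x (j + ((t : ℕ) : ZMod m)) : ℕ))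
          = (-1 : ℂ) ^ (∑ j, (x j : ℕ)) := by
        have h0 : (-1 : ℂ) ^ ((x ((t : ℕ) : ZMod m) : ℕ))
            = (-1 : ℂ) ^ ((x ((0 : ZMod m) + ((t : ℕ) : ZMod m)) : ℕ)) := by rw [zero_add]
        rw [h0, Finset.mul_prod_erase Finset.univ
          (fun j => (-1 : ℂ) ^ ((x (j + ((t : ℕ) : ZMod m)) : ℕ))) (Finset.mem_univ (0 : ZMod m)),
          Finset.prod_pow_eq_pow_sum]
        congr 1
        exact Equiv.sum_comp (Equiv.addRight ((t : ℕ) : ZMod m)) (fun j => (x j : ℕ))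
      simp only [hS]
      calc c₀⁻¹ * ∏ j ∈ Finset.univ.erase (0 : ZMod m),
            (-1 : ℂ) ^ ((x (j + ((t : ℕ) : ZMod m)) : ℕ))
          = c₀⁻¹ * ((-1 : ℂ) ^ ((x ((t : ℕ) : ZMod m) : ℕ))
              * ((-1 : ℂ) ^ ((x ((t : ℕ) : ZMod m) : ℕ))
              * ∏ j ∈ Finset.univ.erase (0 : ZMod m),
                  (-1 : ℂ) ^ ((x (j + ((t : ℕ) : ZMod m)) : ℕ)))) := by
            rw [← mul_assoc ((-1 : ℂ) ^ _), hA2, one_mul]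
        _ = (c₀⁻¹ * (-1 : ℂ) ^ (∑ j, (x j : ℕ)))
              * (-1 : ℂ) ^ ((x ((t : ℕ) : ZMod m) : ℕ)) := by
            rw [hfull]; ring
    rw [Finset.sum_congr rfl fun t _ => hSx t, ← Finset.mul_sum,
      sum_zmod_range m (fun c => (-1 : ℂ) ^ ((x c : ℕ))),
      Finset.sum_congr rfl fun c _ => neg_one_pow_fin2 (x c),
      Finset.sum_sub_distrib, Finset.sum_const, Finset.card_univ, ZMod.card,
      ← Finset.mul_sum, ← Nat.cast_sum, nsmul_eq_mul, mul_one]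
    simp only [hC]
    field_simp
  have hw' : ∀ ν, w ν = (1 / m : ℂ) * ∑ t ∈ Finset.range m, v (permIdx (shiftPerm m t) ν) := by
    intro ν
    have hterm : ∀ t : ℕ, v (permIdx (shiftPerm m t) ν)
        = ∑ x, S (fun j => x (j + ((t : ℕ) : ZMod m))) * (if ν = nuX m x then 1 else 0) := by
      intro t
      rw [hv' (permIdx (shiftPerm m t) ν), sum_shift' m t S ν]
    rw [Finset.sum_congr rfl fun t _ => hterm t, Finset.sum_comm, hw, Finset.mul_sum]
    refine Finset.sum_congr rfl fun x _ => ?_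
    rw [← Finset.sum_mul, ← mul_assoc, key x]
  have hwv : w = (1 / m : ℂ) • ∑ t ∈ Finset.range m,
      (fun ν => v (permIdx (shiftPerm m t) ν)) := by
    funext ν
    rw [Pi.smul_apply, smul_eq_mul, Finset.sum_apply]
    exact hw' ν
  have hCinv : ∀ k : ℕ, ∀ x : ZMod m → Fin 2,
      C (fun j => x (j + ((k : ℕ) : ZMod m))) = C x := by
    intro k x
    have h1 : (∑ j, ((x (j + ((k : ℕ) : ZMod m)) : ℕ))) = ∑ j, (x j : ℕ) :=
      Equiv.sum_comp (Equiv.addRight ((k : ℕ) : ZMod m)) (fun j => (x j : ℕ))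
    simp only [hC]
    rw [h1]
  have hPw : P.mulVec w = w := by
    refine (hP3 w).mpr fun g hg => ?_
    obtain ⟨k, a, rfl⟩ := closure_GP m g₁ g₂ hg₁ hg₂ g hg
    rw [hw]
    exact GP_fixes m k a C (hCinv k)
  have hg₂' : g₂ = GP m 1 0 := by
    rw [hg₂]
    ext p q
    simp [GP, shiftPerm_apply]
  have hA : bosonRep (2 * m) g₂ = Amat m (shiftPerm m 1) := by rw [hg₂', bosonRep_g₂]
  have hP1' : P.conjTranspose = P := hP1
  have h1 : ∀ z, (Amat m (shiftPerm m 1)).mulVec (P.mulVec z) = P.mulVec z := by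
    intro z
    rw [← hA]
    refine (hP3 (P.mulVec z)).mp ?_ g₂ (Submonoid.subset_closure (by simp))
    rw [Matrix.mulVec_mulVec, hP2]
  have h2 : Amat m (shiftPerm m 1) * P = P := by
    ext ν ν'
    have h := congrFun (h1 (Pi.single ν' 1)) ν
    rw [Matrix.mulVec_mulVec] at h
    simpa using h
  have h3 : P * Amat m (shiftPerm m 1)⁻¹ = P := by
    have h := congrArg Matrix.conjTranspose h2
    rw [Matrix.conjTranspose_mul, Amat_conjT, hP1'] at h
    exact h
  have h4 : ∀ t : ℕ, P * Amat m ((shiftPerm m 1)⁻¹ ^ t) = P := by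
    intro t
    induction t with
    | zero => rw [pow_zero, Amat_one, mul_one]
    | succ t ih => rw [pow_succ, ← Amat_mul, ← mul_assoc, ih, h3]
  have h5 : P * Amat m (shiftPerm m 1) = P := by
    rw [← shiftPerm_inv_pow m]
    exact h4 (m - 1)
  have h6 : ∀ z, P.mulVec ((Amat m (shiftPerm m 1)).mulVec z) = P.mulVec z := fun z => by
    rw [Matrix.mulVec_mulVec, h5]
  have h7 : ∀ t : ℕ, P.mulVec (fun ν => v (permIdx (shiftPerm m t) ν)) = P.mulVec v := by
    intro t
    induction t with
    | zero =>
      have hid : (fun ν => v (permIdx (shiftPerm m 0) ν)) = v := by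
        funext ν
        rw [shiftPerm_zero, permIdx_one]
      rw [hid]
    | succ t ih =>
      have hstep : (fun ν => v (permIdx (shiftPerm m (t + 1)) ν))
          = (Amat m (shiftPerm m 1)).mulVec (fun ν => v (permIdx (shiftPerm m t) ν)) := by
        rw [Amat_mulVec]
        funext ν
        rw [permIdx_permIdx, shiftPerm_mul, Nat.add_comm 1 t]
      rw [hstep, h6, ih]
  have hPvw : P.mulVec v = w := by
    have hPwv : P.mulVec w = P.mulVec v := by
      rw [hwv, Matrix.mulVec_smul, mulVec_sumgen,
        Finset.sum_congr rfl fun t _ => h7 t, Finset.sum_const, Finset.card_range,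
        ← Nat.cast_smul_eq_nsmul ℂ, smul_smul, one_div, inv_mul_cancel₀ hm, one_smul]
    rw [← hPwv, hPw]
  rw [hPvw]
  -- final norm computation
  have hwval : ∀ y : ZMod m → Fin 2, w (nuX m y) = C y := by
    intro y
    show (∑ x, C x * (if nuX m y = nuX m x then 1 else 0)) = C y
    rw [Finset.sum_eq_single y]
    · rw [if_pos rfl, mul_one]
    · intro x _ hxy
      rw [if_neg fun h => hxy (nuX_injective m h).symm, mul_zero]
    · intro h
      exact absurd (Finset.mem_univ _) h
  have hwzero : ∀ ν, ν ∉ Finset.univ.image (nuX m) → w ν = 0 := by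
    intro ν hν
    show (∑ x, C x * (if ν = nuX m x then 1 else 0)) = 0
    refine Finset.sum_eq_zero fun x _ => ?_
    rw [if_neg fun h => hν (Finset.mem_image.mpr ⟨x, Finset.mem_univ x, h.symm⟩), mul_zero]
  have hsum1 : ∑ ν, ‖w ν‖ ^ 2
      = ∑ y : ZMod m → Fin 2, ‖C y‖ ^ 2 := by
    rw [← Finset.sum_subset (Finset.subset_univ (Finset.univ.image (nuX m)))
      (fun ν _ hν => by rw [hwzero ν hν]; simp)]
    rw [Finset.sum_image (fun x _ y _ h => nuX_injective m h)]
    exact Finset.sum_congr rfl fun y _ => by rw [hwval y]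
  rw [hsum1]
  have hCr : ∀ y : ZMod m → Fin 2, C y
      = (((Real.sqrt 2 ^ m)⁻¹ * ((-1 : ℝ) ^ (∑ j, (y j : ℕ))
          * (((m : ℝ) - 2 * ((∑ j, (y j : ℕ) : ℕ) : ℝ)) / m)) : ℝ) : ℂ) := by
    intro y
    simp only [hC, hc₀]
    push_cast
    ring
  have habs : ∀ y : ZMod m → Fin 2, ‖C y‖ ^ 2
      = ((Real.sqrt 2 ^ m)⁻¹ * ((-1 : ℝ) ^ (∑ j, (y j : ℕ))
          * (((m : ℝ) - 2 * ((∑ j, (y j : ℕ) : ℕ) : ℝ)) / m))) ^ 2 := by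
    intro y
    rw [hCr y, Complex.norm_real, Real.norm_eq_abs, sq_abs]
  rw [Finset.sum_congr rfl fun y _ => habs y]
  have hr : ∀ y : ZMod m → Fin 2, ((Real.sqrt 2 ^ m)⁻¹ * ((-1 : ℝ) ^ (∑ j, (y j : ℕ))
      * (((m : ℝ) - 2 * ((∑ j, (y j : ℕ) : ℕ) : ℝ)) / m))) ^ 2
      = ((2 : ℝ) ^ m)⁻¹ * (((m : ℝ) - 2 * (∑ j, ((y j : ℕ) : ℝ))) ^ 2 / (m : ℝ) ^ 2) := by
    intro y
    have h2m : (((Real.sqrt 2 ^ m)⁻¹ : ℝ)) ^ 2 = ((2 : ℝ) ^ m)⁻¹ := by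
      rw [inv_pow, pow_right_comm, Real.sq_sqrt (by norm_num : (0:ℝ) ≤ 2)]
    have hneg : (((-1 : ℝ) ^ (∑ j, (y j : ℕ))) : ℝ) ^ 2 = 1 := by
      rw [← pow_mul, mul_comm, pow_mul, neg_one_sq, one_pow]
    rw [mul_pow, mul_pow, h2m, hneg, one_mul, div_pow, Nat.cast_sum]
  rw [Finset.sum_congr rfl fun y _ => hr y, ← Finset.mul_sum, ← Finset.sum_div, sum_sq_key m]
  have h2mne : ((2 : ℝ) ^ m) ≠ 0 := pow_ne_zero m two_ne_zero
  field_simp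

end BSF
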